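/- Every ideal I of R = C^∞(M,ℝ) with dim_ℝ(R/I) = 1 is of the form 𝔪_x = {f ∈ R | f(x) = 0} for a unique point x ∈ M. Equivalently, every maximal ideal of R of finite codimension corresponds to a point of M. -/

import Mathlib

open scoped Manifold
open Module Filter Topology

noncomputable section

/-- The ℝ-algebra of smooth real-valued functions on a manifold `M` modelled on `ℝ^m`. -/
abbrev SmoothFns (m : ℕ) (M : Type*) [TopologicalSpace M]
    [ChartedSpace (EuclideanSpace ℝ (Fin m)) M] : Type _ :=
  C^(⊤ : ℕ∞)⟮𝓡 m, M; 𝓘(ℝ, ℝ), ℝ⟯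

variable {m : ℕ} {M : Type*} [TopologicalSpace M] [T2Space M] [SecondCountableTopology M]
  [ChartedSpace (EuclideanSpace ℝ (Fin m)) M] [IsManifold (𝓡 m) (⊤ : ℕ∞) M]

/-- The ideal `𝔪ₓ` of smooth functions vanishing at the point `x`. -/
def mIdeal (x : M) : Ideal (SmoothFns m M) where
  carrier := {f | f x = 0}
  add_mem' := by intro f g hf hg; simp_all
  zero_mem' := by simp
  smul_mem' := by intro c f hf; simp_all

/-- The ideal `𝔫ₓ` of smooth functions vanishing on some neighbourhood of the point `x`. -/
def nIdeal (x : M) : Ideal (SmoothFns m M) where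
  carrier := {f | ∀ᶠ y in 𝓝 x, f y = 0}
  add_mem' := by
    intro f g hf hg
    filter_upwards [hf, hg] with y h1 h2
    simp [h1, h2]
  zero_mem' := by filter_upwards with y; simp
  smul_mem' := by
    intro c f hf
    filter_upwards [hf] with y h
    simp [h]

/-- The spectrum of an ideal: the set of common zeros of its elements. -/
def idealSpec (I : Ideal (SmoothFns m M)) : Set M :=
  {x : M | ∀ f ∈ I, f x = 0}

/-- Evaluation at a point as an `ℝ`-algebra homomorphism. -/
def evalA (x : M) : SmoothFns m M →ₐ[ℝ] ℝ :=
  (Pi.evalAlgHom ℝ (fun _ : M => ℝ) x).comp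
    (ContMDiffMap.coeFnAlgHom : C^(⊤ : ℕ∞)⟮𝓡 m, M; 𝓘(ℝ, ℝ), ℝ⟯ →ₐ[ℝ] M → ℝ)

@[simp] lemma evalA_apply (x : M) (f : SmoothFns m M) : evalA x f = f x := rfl

theorem exists_exhaustion_fn :
    ∃ h : SmoothFns m M, ∀ c : ℝ, ∃ C : Set M, IsCompact C ∧ {x | h x ≤ c} ⊆ C := by
  haveI : LocallyCompactSpace M :=
    ChartedSpace.locallyCompactSpace (EuclideanSpace ℝ (Fin m)) M
  haveI : SigmaCompactSpace M := inferInstance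
  set K := CompactExhaustion.choice M with hK
  set U : ℕ → Set M := fun n => interior (K (n + 1)) with hU
  obtain ⟨ψ, hψ⟩ := SmoothPartitionOfUnity.exists_isSubordinate (𝓡 m) isClosed_univ U
    (fun _ => isOpen_interior)
    (fun x _ => by
      obtain ⟨n, hn⟩ := K.exists_mem x
      exact Set.mem_iUnion.2 ⟨n, K.subset_interior_succ n hn⟩)
  refine ⟨⟨fun x => ∑ᶠ n, ψ n x • ((n : ℕ) : ℝ),
    hψ.contMDiff_finsum_smul (fun _ => isOpen_interior) (fun _ => contMDiffOn_const)⟩, ?_⟩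
  intro c
  refine ⟨K (⌈c⌉₊ + 1), K.isCompact _, ?_⟩
  intro x hx
  simp only [Set.mem_setOf_eq, ContMDiffMap.coeFn_mk] at hx
  -- the minimal index in the finsupport
  have hne : (ψ.finsupport x).Nonempty := by
    obtain ⟨i, hi⟩ := ψ.exists_pos_of_mem (Set.mem_univ x)
    exact ⟨i, (ψ.mem_finsupport x).2 (ne_of_gt hi)⟩
  set n₀ := (ψ.finsupport x).min' hne with hn₀
  have hbound : ((n₀ : ℕ) : ℝ) ≤ ∑ᶠ n, ψ n x • ((n : ℕ) : ℝ) := by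
    rw [← ψ.sum_finsupport_smul_eq_finsum x (fun i _ => ((i : ℕ) : ℝ))]
    calc ((n₀ : ℕ) : ℝ) = ∑ i ∈ ψ.finsupport x, ψ i x • ((n₀ : ℕ) : ℝ) := by
          rw [← Finset.sum_smul, ψ.sum_finsupport x (Set.mem_univ x), one_smul]
      _ ≤ ∑ i ∈ ψ.finsupport x, ψ i x • ((i : ℕ) : ℝ) := by
          refine Finset.sum_le_sum fun i hi => ?_
          have : (n₀ : ℕ) ≤ i := (ψ.finsupport x).min'_le i hi
          exact smul_le_smul_of_nonneg_left (by exact_mod_cast this) (ψ.nonneg i x)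
  have hn₀le : n₀ ≤ ⌈c⌉₊ := by
    have : ((n₀ : ℕ) : ℝ) ≤ c := hbound.trans hx
    exact_mod_cast this.trans (Nat.le_ceil c)
  have hxsupp : x ∈ U n₀ := hψ n₀ (subset_tsupport _ ((ψ.mem_finsupport x).1 ((ψ.finsupport x).min'_mem hne)))
  exact K.subset (Nat.succ_le_succ hn₀le) (interior_subset hxsupp)

theorem mem_mIdeal_iff (x : M) (f : SmoothFns m M) : f ∈ mIdeal x ↔ f x = 0 := Iff.rfl

theorem maximal_fd_eq (I : Ideal (SmoothFns m M)) (hI : I.IsMaximal)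
    (hfd : FiniteDimensional ℝ (SmoothFns m M ⧸ I)) : ∃ x : M, I = mIdeal x := by
  obtain ⟨h, hprop⟩ := exists_exhaustion_fn (m := m) (M := M)
  -- the image of `h` in the quotient is integral over ℝ
  have hint : IsIntegral ℝ (Ideal.Quotient.mk I h) := .of_finite ℝ _
  obtain ⟨p, pmonic, hp⟩ := hint
  set g : SmoothFns m M := Polynomial.aeval h p with hgdef
  have hgI : g ∈ I := by
    rw [← Ideal.Quotient.eq_zero_iff_mem]
    have h2 : Ideal.Quotient.mkₐ ℝ I g = 0 := by
      rw [hgdef, ← Polynomial.aeval_algHom_apply, Polynomial.aeval_def]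
      exact hp
    simpa using h2

  have hgeval : ∀ x : M, g x = p.eval (h x) := by
    intro x
    have : evalA x g = Polynomial.aeval (evalA x h) p :=
      (Polynomial.aeval_algHom_apply (evalA x) h p).symm
    simpa [Polynomial.coe_aeval_eq_eval] using this
  -- the zero set of g is compact
  have hpne : p ≠ 0 := pmonic.ne_zero
  obtain ⟨c, hc⟩ := (Polynomial.finite_setOf_isRoot hpne).bddAbove
  set Z : Set M := {x | g x = 0} with hZ
  have hZclosed : IsClosed Z := isClosed_eq g.contMDiff.continuous continuous_const
  obtain ⟨C, hCcomp, hCsub⟩ := hprop c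
  have hZcomp : IsCompact Z := hCcomp.of_isClosed_subset hZclosed (by
    intro x hx
    apply hCsub
    have : h x ∈ {t | p.IsRoot t} := by
      simp only [Set.mem_setOf_eq, Polynomial.IsRoot]
      rw [← hgeval x]; exact hx
    exact hc this)
  -- there is a common zero of I
  have hcommon : ∃ x : M, ∀ f ∈ I, f x = 0 := by
    by_contra hcon
    push_neg at hcon
    choose F hFI hFne using hcon
    -- cover Z by the open sets where F x does not vanish
    obtain ⟨t, ht⟩ := hZcomp.elim_finite_subcover (fun x : M => {y | F x y ≠ 0})
      (fun x => isOpen_ne.preimage (F x).contMDiff.continuous)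
      (fun x hx => Set.mem_iUnion.2 ⟨x, hFne x⟩)
    set G : SmoothFns m M := g ^ 2 + ∑ x ∈ t, F x ^ 2 with hG
    have hGI : G ∈ I := I.add_mem (I.pow_mem_of_mem hgI 2 (by norm_num))
      (Ideal.sum_mem I fun x _ => I.pow_mem_of_mem (hFI x) 2 (by norm_num))
    have hGeval : ∀ y : M, G y = (g y) ^ 2 + ∑ x ∈ t, (F x y) ^ 2 := by
      intro y
      have : evalA y G = (evalA y g) ^ 2 + ∑ x ∈ t, (evalA y (F x)) ^ 2 := by
        rw [hG, map_add, map_pow, map_sum]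
        simp [map_pow]
      simpa using this
    have hGne : ∀ y : M, G y ≠ 0 := by
      intro y
      rw [hGeval y]
      by_cases hy : y ∈ Z
      · obtain ⟨x, hxt, hxy⟩ := Set.mem_iUnion₂.1 (ht hy)
        have hpos : 0 < ∑ x ∈ t, (F x y) ^ 2 :=
          Finset.sum_pos' (fun i _ => sq_nonneg _) ⟨x, hxt, by have h' : F x y ≠ 0 := hxy; positivity⟩
        have hgy : g y = 0 := hy
        rw [hgy]
        simpa using hpos.ne'
      · have hgy : g y ≠ 0 := hy
        have : 0 < (g y) ^ 2 := by positivity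
        have h2 : 0 ≤ ∑ x ∈ t, (F x y) ^ 2 := Finset.sum_nonneg fun i _ => sq_nonneg _
        linarith
    -- G is invertible, contradiction
    set Ginv : SmoothFns m M := ⟨fun y => (G y)⁻¹, G.contMDiff.inv₀ hGne⟩ with hGinv
    have hone : G * Ginv = 1 := by
      ext y
      simp only [ContMDiffMap.coe_mul, Pi.mul_apply, hGinv, ContMDiffMap.coeFn_mk,
        ContMDiffMap.coe_one, Pi.one_apply]
      exact mul_inv_cancel₀ (hGne y)
    have : (1 : SmoothFns m M) ∈ I := hone ▸ I.mul_mem_right Ginv hGI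
    exact hI.ne_top ((Ideal.eq_top_iff_one I).2 this)
  obtain ⟨x, hx⟩ := hcommon
  refine ⟨x, hI.eq_of_le ?_ hx⟩
  intro htop
  have : (1 : SmoothFns m M) ∈ mIdeal x := htop ▸ Submodule.mem_top
  simpa [mem_mIdeal_iff] using this

theorem codim_one_aux (I : Ideal (SmoothFns m M))
    (hrank : finrank ℝ (SmoothFns m M ⧸ I) = 1) :
    I.IsMaximal ∧ FiniteDimensional ℝ (SmoothFns m M ⧸ I) := by
  haveI hfd : FiniteDimensional ℝ (SmoothFns m M ⧸ I) :=
    FiniteDimensional.of_finrank_eq_succ hrank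
  haveI : Nontrivial (SmoothFns m M ⧸ I) :=
    Module.nontrivial_of_finrank_pos (R := ℝ) (by rw [hrank]; norm_num)
  have hspan : Submodule.span ℝ {(1 : SmoothFns m M ⧸ I)} = ⊤ :=
    (finrank_eq_one_iff_of_nonzero (1 : SmoothFns m M ⧸ I) one_ne_zero).mp hrank
  have hsurj : Function.Surjective (algebraMap ℝ (SmoothFns m M ⧸ I)) := by
    intro q
    have hq : q ∈ Submodule.span ℝ {(1 : SmoothFns m M ⧸ I)} := hspan ▸ Submodule.mem_top
    obtain ⟨c, hc⟩ := Submodule.mem_span_singleton.1 hq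
    exact ⟨c, by rw [Algebra.algebraMap_eq_smul_one]; exact hc⟩
  have hinj : Function.Injective (algebraMap ℝ (SmoothFns m M ⧸ I)) :=
    (algebraMap ℝ (SmoothFns m M ⧸ I)).injective
  set e : ℝ ≃ₐ[ℝ] SmoothFns m M ⧸ I :=
    AlgEquiv.ofBijective (Algebra.ofId ℝ (SmoothFns m M ⧸ I)) ⟨hinj, hsurj⟩ with he
  set φ : SmoothFns m M →+* ℝ :=
    ((e.symm : (SmoothFns m M ⧸ I) →ₐ[ℝ] ℝ) : (SmoothFns m M ⧸ I) →+* ℝ).comp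
      (Ideal.Quotient.mk I) with hφ
  have hφsurj : Function.Surjective φ := by
    intro c
    obtain ⟨f, hf⟩ := Ideal.Quotient.mk_surjective (e c)
    exact ⟨f, by simp [hφ, hf]⟩
  have hker : RingHom.ker φ = I := by
    ext f
    simp only [RingHom.mem_ker, hφ, RingHom.coe_comp, Function.comp_apply,
      AlgHom.coe_ringHom_mk, AlgHom.coe_coe]
    constructor
    · intro hf0
      have h1 : Ideal.Quotient.mk I f = 0 := by
        have := congrArg e hf0
        simpa using this
      exact Ideal.Quotient.eq_zero_iff_mem.1 h1
    · intro hfI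
      have h1 : Ideal.Quotient.mk I f = 0 := Ideal.Quotient.eq_zero_iff_mem.2 hfI
      simp [h1]
  exact ⟨hker ▸ RingHom.ker_isMaximal_of_surjective φ hφsurj, hfd⟩


/-- Every ideal of `R = C^∞(M,ℝ)` of codimension `1` is of the form
`𝔪ₓ = {f | f x = 0}` for a unique point `x ∈ M`; equivalently, every maximal ideal of `R`
of finite codimension corresponds to a point of `M`. -/
theorem codim_one_ideals_are_point_ideals [Nonempty M] :
    (∀ I : Ideal (SmoothFns m M),
        Module.finrank ℝ (SmoothFns m M ⧸ I) = 1 → ∃! x : M, I = mIdeal x) ∧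
    (∀ I : Ideal (SmoothFns m M), I.IsMaximal →
        FiniteDimensional ℝ (SmoothFns m M ⧸ I) → ∃ x : M, I = mIdeal x) := by
  constructor
  · intro I hrank
    obtain ⟨hmax, hfd⟩ := codim_one_aux I hrank
    obtain ⟨x, hx⟩ := maximal_fd_eq I hmax hfd
    refine ⟨x, hx, fun y hy => ?_⟩
    by_contra hne
    haveI : LocallyCompactSpace M :=
      ChartedSpace.locallyCompactSpace (EuclideanSpace ℝ (Fin m)) M
    haveI : SigmaCompactSpace M := inferInstance
    obtain ⟨f, hf0, hf1, -⟩ := exists_contMDiffMap_zero_one_of_isClosed (𝓡 m)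
      (isClosed_singleton (x := x)) (isClosed_singleton (x := y))
      (by simpa [Set.disjoint_singleton] using fun h => hne h.symm)
    have hfmem : f ∈ mIdeal x := hf0 rfl
    rw [← hx, hy] at hfmem
    have h0 : f y = 0 := hfmem
    have h1 : f y = 1 := hf1 rfl
    rw [h0] at h1
    exact zero_ne_one h1
  · intro I hI hfd
    exact maximal_fd_eq I hI hfd
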